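/- Let π be a finite group, E an invertible π-lattice, and C a coflabby π-lattice. Then every short exact sequence of π-lattices 0 → C → N → E → 0 splits. -/

import Mathlib

/-- A permutation `π`-lattice: equivariantly isomorphic to `ι →₀ ℤ` with `π`
permuting the basis `ι`. -/
def IsPermutationLattice (π : Type*) [Group π] (M : Type*) [AddCommGroup M]
    [DistribMulAction π M] : Prop :=
  ∃ (ι : Type) (_ : Fintype ι) (σ : π →* Equiv.Perm ι) (e : M ≃+ (ι →₀ ℤ)),
    ∀ (g : π) (m : M), e (g • m) = Finsupp.equivMapDomain (σ g) (e m)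

/-- An invertible (permutation projective) `π`-lattice: a direct summand of a
permutation lattice. -/
def IsInvertibleLattice (π : Type*) [Group π] (M : Type*) [AddCommGroup M]
    [DistribMulAction π M] : Prop :=
  ∃ (ι : Type) (_ : Fintype ι) (σ : π →* Equiv.Perm ι)
    (s : M →+ (ι →₀ ℤ)) (p : (ι →₀ ℤ) →+ M),
    (∀ (g : π) (m : M), s (g • m) = Finsupp.equivMapDomain (σ g) (s m)) ∧
    (∀ (g : π) (f : ι →₀ ℤ), p (Finsupp.equivMapDomain (σ g) f) = g • p f) ∧
    ∀ m, p (s m) = m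

/-- Flabby: Tate cohomology `Ĥ⁻¹(H, M) = 0` for every subgroup `H`, i.e. every
element killed by the norm of `H` lies in the subgroup generated by elements
`h • y - y`. -/
def IsFlabby (π : Type*) [Group π] (M : Type*) [AddCommGroup M]
    [DistribMulAction π M] : Prop :=
  ∀ (H : Subgroup π) [Fintype H] (m : M),
    (∑ h : H, (h : π) • m) = 0 →
      m ∈ AddSubgroup.closure {x : M | ∃ (h : H) (y : M), x = (h : π) • y - y}

/-- Coflabby: `H¹(H, M) = 0` for every subgroup `H`, i.e. every 1-cocycle is a
1-coboundary. -/
def IsCoflabby (π : Type*) [Group π] (M : Type*) [AddCommGroup M]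
    [DistribMulAction π M] : Prop :=
  ∀ (H : Subgroup π) (f : H → M),
    (∀ g h : H, f (g * h) = f g + (g : π) • f h) →
      ∃ m : M, ∀ g : H, f g = (g : π) • m - m

/-- A bundled `π`-module (carrier with an additive action of `π`). -/
structure GLat (π : Type) [Group π] where
  carrier : Type
  [acg : AddCommGroup carrier]
  [act : DistribMulAction π carrier]

attribute [instance] GLat.acg GLat.act

/-- Similarity of `π`-lattices: `M ⊕ Q₁ ≅ N ⊕ Q₂` equivariantly for some
permutation lattices `Q₁`, `Q₂`. -/
def SimilarLattice (π : Type*) [Group π] (M N : Type*) [AddCommGroup M]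
    [DistribMulAction π M] [AddCommGroup N] [DistribMulAction π N] : Prop :=
  ∃ (ι κ : Type) (_ : Fintype ι) (_ : Fintype κ) (σ : π →* Equiv.Perm ι)
    (τ : π →* Equiv.Perm κ) (e : M × (ι →₀ ℤ) ≃+ N × (κ →₀ ℤ)),
    ∀ (g : π) (m : M) (f : ι →₀ ℤ),
      e (g • m, Finsupp.equivMapDomain (σ g) f) =
        (g • (e (m, f)).1, Finsupp.equivMapDomain (τ g) (e (m, f)).2)

/-- A flabby resolution `0 → M → P → F → 0` of `M`: `P` is a permutation
lattice (modelled as `ι →₀ ℤ`) and `F` is flabby. -/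
def FlabbyResolution (π : Type*) [Group π] (M F : Type*) [AddCommGroup M]
    [DistribMulAction π M] [AddCommGroup F] [DistribMulAction π F] : Prop :=
  ∃ (ι : Type) (_ : Fintype ι) (σ : π →* Equiv.Perm ι)
    (i : M →+ (ι →₀ ℤ)) (p : (ι →₀ ℤ) →+ F),
    (∀ (g : π) (m : M), i (g • m) = Finsupp.equivMapDomain (σ g) (i m)) ∧
    (∀ (g : π) (f : ι →₀ ℤ), p (Finsupp.equivMapDomain (σ g) f) = g • p f) ∧
    Function.Injective i ∧ Function.Surjective p ∧
    (∀ f : ι →₀ ℤ, p f = 0 ↔ f ∈ Set.range i) ∧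
    IsFlabby π F

/-- `[M]ᶠˡ` is invertible: some flabby resolution `0 → M → P → F → 0` has `F`
similar to an invertible lattice `E`. -/
def FlabbyClassInvertible (π : Type) [Group π] (M : Type*) [AddCommGroup M]
    [DistribMulAction π M] : Prop :=
  ∃ (F E : GLat π), (Module.Free ℤ F.carrier ∧ Module.Finite ℤ F.carrier) ∧
    (Module.Free ℤ E.carrier ∧ Module.Finite ℤ E.carrier) ∧
    FlabbyResolution π M F.carrier ∧ IsInvertibleLattice π E.carrier ∧
    SimilarLattice π F.carrier E.carrier


section ShapiroAux

variable {π : Type} [Group π] {ι : Type} {C : Type} [AddCommGroup C]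
  [DistribMulAction π C]

/-- Shapiro-style lemma: a 1-cocycle of `π` valued in the coinduced module
`ι → C` (for a `π`-set `ι`) is a coboundary, provided `C` is coflabby. -/
theorem shapiro_coboundary (σ : π →* Equiv.Perm ι) (hC : IsCoflabby π C)
    (d : π → ι → C)
    (hd : ∀ g h j, d (g * h) j = d g j + g • d h (σ g⁻¹ j)) :
    ∃ u : ι → C, ∀ g j, d g j = g • u (σ g⁻¹ j) - u j := by
  classical
  letI : MulAction π ι := MulAction.compHom ι σ
  have hsmul : ∀ (g : π) (j : ι), g • j = σ g j := fun _ _ => rfl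
  let r : ι → ι := fun j => (Quotient.mk (MulAction.orbitRel π ι) j).out
  have hr_orbit : ∀ j, ∃ g : π, g • r j = j := by
    intro j
    obtain ⟨g, hg⟩ := Quotient.mk_out (s := MulAction.orbitRel π ι) j
    have hg' : g • j = r j := hg
    exact ⟨g⁻¹, by rw [← hg', inv_smul_smul]⟩
  have hr_const : ∀ (g : π) (j : ι), r (g • j) = r j := by
    intro g j
    have h1 : (Quotient.mk (MulAction.orbitRel π ι) (g • j)) =
        (Quotient.mk (MulAction.orbitRel π ι) j) :=
      Quotient.sound ⟨g, rfl⟩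
    show (Quotient.mk (MulAction.orbitRel π ι) (g • j)).out = _
    rw [h1]
  have hm : ∀ t : ι, ∃ m : C, ∀ h : MulAction.stabilizer π t,
      d (h : π) t = (h : π) • m - m := by
    intro t
    apply hC (MulAction.stabilizer π t) (fun h => d (h : π) t)
    intro g h
    have hgt : σ (g : π)⁻¹ t = t := by
      have h1 : (g : π) • t = t := g.2
      have h2 : σ (g : π) t = t := by rw [← hsmul]; exact h1
      rw [map_inv]
      exact (Equiv.symm_apply_eq _).2 h2.symm
    have := hd (g : π) (h : π) t
    rw [hgt] at this
    exact this
  choose m hmspec using hm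
  choose gg hgg using hr_orbit
  refine ⟨fun j => gg j • m (r j) - d (gg j) j, ?_⟩
  intro g j
  have hjb' : g⁻¹ • j = σ g⁻¹ j := hsmul g⁻¹ j
  have hgjb : g • (σ g⁻¹ j) = j := by rw [← hjb', smul_inv_smul]
  have hrjb : r (σ g⁻¹ j) = r j := by rw [← hjb', hr_const]
  have ha : gg j • r j = j := hgg j
  have hb : gg (σ g⁻¹ j) • r j = σ g⁻¹ j := by
    have := hgg (σ g⁻¹ j); rwa [hrjb] at this
  have hgb : (g * gg (σ g⁻¹ j)) • r j = j := by rw [mul_smul, hb, hgjb]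
  have hhstab : (gg j)⁻¹ * (g * gg (σ g⁻¹ j)) ∈ MulAction.stabilizer π (r j) := by
    show ((gg j)⁻¹ * (g * gg (σ g⁻¹ j))) • r j = r j
    rw [mul_smul, hgb]
    exact inv_smul_eq_iff.2 ha.symm
  have hσa : σ (gg j)⁻¹ j = r j := by
    rw [← hsmul]
    exact inv_smul_eq_iff.2 ha.symm
  have hah : gg j * ((gg j)⁻¹ * (g * gg (σ g⁻¹ j))) = g * gg (σ g⁻¹ j) := by
    group
  have e1 : d (gg j * ((gg j)⁻¹ * (g * gg (σ g⁻¹ j)))) j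
      = d (gg j) j + gg j • d ((gg j)⁻¹ * (g * gg (σ g⁻¹ j))) (r j) := by
    rw [hd, hσa]
  have hspec : d ((gg j)⁻¹ * (g * gg (σ g⁻¹ j))) (r j)
      = ((gg j)⁻¹ * (g * gg (σ g⁻¹ j))) • m (r j) - m (r j) :=
    hmspec (r j) ⟨_, hhstab⟩
  have e2 : d (g * gg (σ g⁻¹ j)) j = d g j + g • d (gg (σ g⁻¹ j)) (σ g⁻¹ j) :=
    hd g _ j
  rw [hah, e2, hspec] at e1
  have hms : gg j • (((gg j)⁻¹ * (g * gg (σ g⁻¹ j))) • m (r j))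
      = g • (gg (σ g⁻¹ j) • m (r j)) := by
    rw [← mul_smul, hah, mul_smul]
  rw [smul_sub, hms] at e1
  -- e1 : d g j + g • d (gg jb) jb = d (gg j) j + (g • (gg jb • m (r j)) - gg j • m (r j))
  have e3 : d g j = (d (gg j) j + (g • (gg (σ g⁻¹ j) • m (r j)) - gg j • m (r j)))
      - g • d (gg (σ g⁻¹ j)) (σ g⁻¹ j) := eq_sub_of_add_eq e1
  show d g j = g • (gg (σ g⁻¹ j) • m (r (σ g⁻¹ j)) - d (gg (σ g⁻¹ j)) (σ g⁻¹ j))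
      - (gg j • m (r j) - d (gg j) j)
  rw [hrjb, smul_sub, e3]
  abel

end ShapiroAux

/-- Every short exact sequence 0 → C → N → E → 0 of π-lattices with
C coflabby and E invertible splits. -/
theorem ses_coflabby_invertible_splits (π : Type) [Group π] [Fintype π]
    (C N E : Type) [AddCommGroup C] [AddCommGroup N] [AddCommGroup E]
    [DistribMulAction π C] [DistribMulAction π N] [DistribMulAction π E]
    [Module.Free ℤ C] [Module.Finite ℤ C] [Module.Free ℤ N] [Module.Finite ℤ N]
    [Module.Free ℤ E] [Module.Finite ℤ E]
    (hC : IsCoflabby π C) (hE : IsInvertibleLattice π E)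
    (i : C →+ N) (p : N →+ E)
    (hi : ∀ (g : π) (x : C), i (g • x) = g • i x)
    (hp : ∀ (g : π) (x : N), p (g • x) = g • p x)
    (hinj : Function.Injective i) (hsurj : Function.Surjective p)
    (hex : ∀ x : N, p x = 0 ↔ x ∈ Set.range i) :
    ∃ s : E →+ N, (∀ (g : π) (x : E), s (g • x) = g • s x) ∧ ∀ x : E, p (s x) = x := by
  classical
  obtain ⟨ι, _, σ, sE, q, hsE, hq, hqs⟩ := hE
  -- a ℤ-linear section of p
  obtain ⟨L, hL⟩ := Module.projective_lifting_property p.toIntLinearMap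
    (LinearMap.id : E →ₗ[ℤ] E) hsurj
  set s₀ : E →+ N := L.toAddMonoidHom with hs₀def
  have hps₀ : ∀ x, p (s₀ x) = x := by
    intro x
    have := congrArg (fun f : E →ₗ[ℤ] E => f x) hL
    simpa [s₀] using this
  -- the defect of equivariance of s₀, as an AddMonoidHom
  set aH : π → (E →+ N) := fun g =>
    ((DistribMulAction.toAddMonoidHom N g).comp s₀).comp
      (DistribMulAction.toAddMonoidHom E g⁻¹) - s₀ with haHdef
  have haH : ∀ (g : π) (x : E), aH g x = g • s₀ (g⁻¹ • x) - s₀ x := fun g x => rfl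
  have hpa : ∀ (g : π) (x : E), p (aH g x) = 0 := by
    intro g x
    rw [haH, map_sub, hp, hps₀, hps₀, smul_inv_smul, sub_self]
  have hamem : ∀ (g : π) (x : E), aH g x ∈ Set.range i := fun g x => (hex _).1 (hpa g x)
  set c : π → E → C := fun g x => Function.invFun i (aH g x) with hcdef
  have hic : ∀ (g : π) (x : E), i (c g x) = aH g x := by
    intro g x
    obtain ⟨y, hy⟩ := hamem g x
    exact Function.invFun_eq ⟨y, hy⟩
  have hcoc : ∀ (g h : π) (x : E), c (g * h) x = c g x + g • c h (g⁻¹ • x) := by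
    intro g h x
    apply hinj
    rw [hic, map_add, hi, hic, hic, haH, haH, haH]
    rw [smul_sub, ← mul_smul, ← mul_smul, ← mul_inv_rev]
    abel
  set d : π → ι → C := fun g j => c g (q (Finsupp.single j 1)) with hddef
  have hqinv : ∀ (g : π) (j : ι),
      g • q (Finsupp.single j 1) = q (Finsupp.single (σ g j) 1) := by
    intro g j
    rw [← hq, Finsupp.equivMapDomain_single]
  have hd : ∀ g h j, d (g * h) j = d g j + g • d h (σ g⁻¹ j) := by
    intro g h j
    have := hcoc g h (q (Finsupp.single j 1))
    rw [hqinv g⁻¹ j] at this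
    exact this
  obtain ⟨u, hu⟩ := shapiro_coboundary σ hC d hd
  set Φ : E →+ C := (Finsupp.liftAddHom (fun j => zmultiplesHom C (u j))).comp sE
    with hΦdef
  have hΦ : ∀ x, Φ x = (sE x).sum (fun j n => n • u j) := by
    intro x
    rfl
  have hsingle : ∀ (j : ι) (n : ℤ), Finsupp.single j n = n • Finsupp.single j (1 : ℤ) := by
    intro j n
    rw [Finsupp.smul_single, smul_eq_mul, mul_one]
  have hcsum : ∀ (g : π) (x : E), c g x = (sE x).sum (fun j n => n • d g j) := by
    intro g x
    apply hinj
    rw [hic, map_finsuppSum]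
    have hx : aH g x = ((aH g).comp q) ((sE x).sum fun j n => Finsupp.single j n) := by
      rw [Finsupp.sum_single, AddMonoidHom.comp_apply, hqs]
    rw [hx, map_finsuppSum]
    apply Finsupp.sum_congr
    intro j _
    rw [hsingle, map_zsmul, map_zsmul, hic, AddMonoidHom.comp_apply]
  have hkey : ∀ (g : π) (x : E), c g x = g • Φ (g⁻¹ • x) - Φ x := by
    intro g x
    rw [hΦ, hΦ, hsE, Finsupp.equivMapDomain_eq_mapDomain, Finsupp.sum_mapDomain_index
      (fun b => zero_smul ℤ (u b)) (fun b m₁ m₂ => add_smul m₁ m₂ (u b))]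
    rw [Finsupp.smul_sum, ← Finsupp.sum_sub, hcsum]
    apply Finsupp.sum_congr
    intro j _
    rw [hu g j, smul_comm, smul_sub]
  refine ⟨s₀ - i.comp Φ, ?_, ?_⟩
  · intro g x
    have h1 : i (c g (g • x)) = aH g (g • x) := hic g (g • x)
    have h2 : c g (g • x) = g • Φ x - Φ (g • x) := by
      have := hkey g (g • x)
      rwa [inv_smul_smul] at this
    rw [haH, inv_smul_smul] at h1
    rw [h2, map_sub, hi] at h1
    simp only [AddMonoidHom.sub_apply, AddMonoidHom.comp_apply]
    rw [smul_sub]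
    -- h1 : g • i (Φ x) - i (Φ (g • x)) = g • s₀ x - s₀ (g • x)
    rw [sub_eq_sub_iff_add_eq_add]
    have h4 := sub_eq_sub_iff_add_eq_add.mp h1
    rw [add_comm]
    exact h4
  · intro x
    simp only [AddMonoidHom.sub_apply, AddMonoidHom.comp_apply, map_sub, hps₀]
    have : p (i (Φ x)) = 0 := (hex _).2 ⟨Φ x, rfl⟩
    rw [this, sub_zero]
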